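/- arXiv:1609.05107 — 2 statements merged into one kernel-verified Lean document; each statement's English description precedes it below -/
import Mathlib

section
/- Let A, B, D be nonnegative real numbers with A ≤ D, let p > 0 and τ₀ ∈ ℝ, and suppose that A ≤ e^{τ} B + e^{−pτ} D for all τ ≥ τ₀. Then there is a constant C > 0, depending only on p and τ₀ (not on A, B, D), such that A ≤ C B^{κ} D^{1−κ}, where κ = p/(1+p). -/
/-- Optimization over `τ` of a two-parameter estimate yields a Hölder-type interpolation
inequality (cf. [LeRousseau2012, Lemma 5.2]). -/
theorem stmt_4 (p τ₀ : ℝ) (hp : 0 < p) :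
    ∃ C : ℝ, 0 < C ∧
      ∀ A B D : ℝ, 0 ≤ A → 0 ≤ B → 0 ≤ D → A ≤ D →
        (∀ τ : ℝ, τ₀ ≤ τ → A ≤ Real.exp τ * B + Real.exp (-p * τ) * D) →
        A ≤ C * B ^ (p / (1 + p)) * D ^ (1 - p / (1 + p)) := by
  have h1p : (0:ℝ) < 1 + p := by linarith
  have h1p' : (1 + p : ℝ) ≠ 0 := ne_of_gt h1p
  set κ := p / (1 + p) with hκdef
  have hκ0 : 0 < κ := div_pos hp h1p
  have hκ1 : κ < 1 := by rw [hκdef, div_lt_one h1p]; linarith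
  have hκp : κ * (1 + p) = p := div_mul_cancel₀ p h1p'
  refine ⟨2 + Real.exp (p * τ₀), by positivity, ?_⟩
  intro A B D hA hB hD hAD h
  have hC0 : (0:ℝ) < 2 + Real.exp (p * τ₀) := by positivity
  rcases hD.eq_or_lt with hD0 | hD0
  · -- D = 0, hence A = 0
    have hA0 : A = 0 := le_antisymm (hAD.trans hD0.ge) hA
    have : (0:ℝ) ≤ (2 + Real.exp (p * τ₀)) * B ^ κ * D ^ (1 - κ) := by positivity
    linarith [this]
  rcases hB.eq_or_lt with hB0 | hB0
  · -- B = 0 : A must be 0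
    have hA0 : A ≤ 0 := by
      by_contra hc
      push_neg at hc
      set τ := max τ₀ ((Real.log D - Real.log A) / p + 1) with hτdef
      have hτ0 : τ₀ ≤ τ := le_max_left _ _
      have h1 := h τ hτ0
      rw [← hB0] at h1
      have h2 : A ≤ Real.exp (-p * τ) * D := by
        have := Real.exp_pos τ; nlinarith
      have hDe : D = Real.exp (Real.log D) := (Real.exp_log hD0).symm
      have hAe : A = Real.exp (Real.log A) := (Real.exp_log hc).symm
      have hlt : Real.exp (-p * τ + Real.log D) < Real.exp (Real.log A) := by
        apply Real.exp_lt_exp.mpr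
        have hτge : (Real.log D - Real.log A) / p + 1 ≤ τ := le_max_right _ _
        have : (Real.log D - Real.log A) / p < τ := by linarith
        have := (div_lt_iff₀ hp).mp this
        nlinarith
      rw [Real.exp_add, ← hDe, ← hAe] at hlt
      nlinarith
    have hA0' : A = 0 := le_antisymm hA0 hA
    rw [hA0', ← hB0, Real.zero_rpow (ne_of_gt hκ0)]
    have : (0:ℝ) ≤ D ^ (1 - κ) := by positivity
    nlinarith
  -- main case : B > 0, D > 0
  set b := Real.log B with hbdef
  set d := Real.log D with hddef
  have hBe : B = Real.exp b := (Real.exp_log hB0).symm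
  have hDe : D = Real.exp d := (Real.exp_log hD0).symm
  have hRHS : B ^ κ * D ^ (1 - κ) = Real.exp (κ * b + (1 - κ) * d) := by
    rw [Real.rpow_def_of_pos hB0, Real.rpow_def_of_pos hD0, ← Real.exp_add]
    rw [hbdef, hddef]
    ring_nf
  set τ₁ := (d - b) / (1 + p) with hτ₁def
  rcases le_or_gt τ₀ τ₁ with hle | hlt
  · -- optimal τ is admissible
    have h1 := h τ₁ hle
    have e1 : τ₁ + b = κ * b + (1 - κ) * d := by
      rw [hτ₁def, hκdef]; field_simp; ring
    have e2 : -p * τ₁ + d = κ * b + (1 - κ) * d := by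
      rw [hτ₁def, hκdef]; field_simp; ring
    have h2 : A ≤ 2 * Real.exp (κ * b + (1 - κ) * d) := by
      calc A ≤ Real.exp τ₁ * B + Real.exp (-p * τ₁) * D := h1
        _ = Real.exp (τ₁ + b) + Real.exp (-p * τ₁ + d) := by
            rw [Real.exp_add, Real.exp_add, ← hBe, ← hDe]
        _ = 2 * Real.exp (κ * b + (1 - κ) * d) := by rw [e1, e2]; ring
    rw [mul_assoc, hRHS]
    have hE := Real.exp_pos (κ * b + (1 - κ) * d)
    nlinarith [Real.exp_pos (p * τ₀)]
  · -- here D is comparable to B, use A ≤ D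
    have hdb : d - b < (1 + p) * τ₀ := by
      rw [hτ₁def] at hlt
      exact (div_lt_iff₀ h1p).mp (by linarith [hlt]) |>.trans_le (by ring_nf; exact le_refl _)
    have key : d ≤ p * τ₀ + (κ * b + (1 - κ) * d) := by
      have k1 : κ * (d - b) ≤ κ * ((1 + p) * τ₀) :=
        mul_le_mul_of_nonneg_left hdb.le hκ0.le
      have k2 : κ * ((1 + p) * τ₀) = p * τ₀ := by rw [← mul_assoc, hκp]
      have k3 : d - (κ * b + (1 - κ) * d) = κ * (d - b) := by ring
      linarith
    have h2 : A ≤ Real.exp (p * τ₀) * Real.exp (κ * b + (1 - κ) * d) := by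
      calc A ≤ D := hAD
        _ = Real.exp d := hDe
        _ ≤ Real.exp (p * τ₀ + (κ * b + (1 - κ) * d)) := Real.exp_le_exp.mpr key
        _ = _ := Real.exp_add _ _
    rw [mul_assoc, hRHS]
    have hE := Real.exp_pos (κ * b + (1 - κ) * d)
    nlinarith
end

section
/- (Pseudoconvexity of the exponential weight.) Let n ≥ 1, let U ⊆ ℝⁿ be open, let K ⊆ U be compact, and let ρ : U → ℝ be smooth (C^∞) with ‖∇ρ(x)‖ = 1 for all x ∈ K. Then there exists α₀ > 0 such that for every α ≥ α₀ the function φ = e^{αρ} satisfies: for every x ∈ K, every τ > 0 and every ξ ∈ ℝⁿ with ‖ξ‖ = τ‖∇φ(x)‖, one has D²φ(x)(ξ,ξ) + τ² D²φ(x)(∇φ(x), ∇φ(x)) > 0, where D²φ(x) denotes the Hessian bilinear form of φ at x. -/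
open Set

noncomputable section

/-- Euclidean space `ℝⁿ`. -/
abbrev E (n : ℕ) := EuclideanSpace ℝ (Fin n)

/-- Hessian bilinear form `D²φ(x)(v,w)`. -/
def hessian {n : ℕ} (φ : E n → ℝ) (x v w : E n) : ℝ :=
  fderiv ℝ (fun y => fderiv ℝ φ y v) x w

open RealInnerProductSpace
section Aux
variable {n : ℕ} {U : Set (E n)} {ρ : E n → ℝ}

lemma hasFDerivAt_expcomp (α : ℝ) {x : E n} (hd : DifferentiableAt ℝ ρ x) :
    HasFDerivAt (fun y => Real.exp (α * ρ y))
      ((α * Real.exp (α * ρ x)) • fderiv ℝ ρ x) x := by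
  have h1 : HasFDerivAt (fun y => α * ρ y) (α • fderiv ℝ ρ x) x :=
    hd.hasFDerivAt.const_mul α
  have := h1.exp
  simpa [smul_smul, mul_comm] using this

lemma fderiv_expcomp (α : ℝ) {x : E n} (hd : DifferentiableAt ℝ ρ x) :
    fderiv ℝ (fun y => Real.exp (α * ρ y)) x
      = (α * Real.exp (α * ρ x)) • fderiv ℝ ρ x :=
  (hasFDerivAt_expcomp α hd).fderiv

lemma gradient_expcomp (α : ℝ) {x : E n} (hd : DifferentiableAt ℝ ρ x) :
    gradient (fun y => Real.exp (α * ρ y)) x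
      = (α * Real.exp (α * ρ x)) • gradient ρ x := by
  simp [gradient, fderiv_expcomp α hd, map_smul]

lemma inner_gradient {f : E n → ℝ} (x v : E n) :
    ⟪gradient f x, v⟫ = fderiv ℝ f x v := by
  simp [gradient, InnerProductSpace.toDual_symm_apply]

lemma hessian_expcomp (hU : IsOpen U) (hρ : ContDiffOn ℝ (⊤ : ℕ∞) ρ U)
    (α : ℝ) {x : E n} (hx : x ∈ U) (v w : E n) :
    hessian (fun y => Real.exp (α * ρ y)) x v w
      = α * Real.exp (α * ρ x) *
          (α * (fderiv ℝ ρ x v) * (fderiv ℝ ρ x w)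
            + (fderiv ℝ (fun y => fderiv ℝ ρ y) x w) v) := by
  have hdiff : ∀ y ∈ U, DifferentiableAt ℝ ρ y := fun y hy =>
    (hρ.differentiableOn (by simp)).differentiableAt (hU.mem_nhds hy)
  have hFc : ContDiffOn ℝ (⊤ : ℕ∞) (fderiv ℝ ρ) U :=
    hρ.fderiv_of_isOpen hU (by exact_mod_cast le_top)
  have hFd : DifferentiableAt ℝ (fderiv ℝ ρ) x :=
    (hFc.differentiableOn (by simp)).differentiableAt (hU.mem_nhds hx)
  have hev : (fun y => fderiv ℝ (fun z => Real.exp (α * ρ z)) y v)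
      =ᶠ[nhds x] (fun y => (α * Real.exp (α * ρ y)) * (fderiv ℝ ρ y v)) := by
    filter_upwards [hU.mem_nhds hx] with y hy
    rw [fderiv_expcomp α (hdiff y hy)]; simp
  have h1 : HasFDerivAt (fun y => α * Real.exp (α * ρ y))
      (α • ((α * Real.exp (α * ρ x)) • fderiv ℝ ρ x)) x :=
    (hasFDerivAt_expcomp α (hdiff x hx)).const_mul α
  have h2 : HasFDerivAt (fun y => fderiv ℝ ρ y v)
      ((fderiv ℝ (fderiv ℝ ρ) x).flip v) x := by
    have := hFd.hasFDerivAt.clm_apply (hasFDerivAt_const (𝕜 := ℝ) v x)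
    simpa using this
  have h3 : HasFDerivAt (fun y => (α * Real.exp (α * ρ y)) * (fderiv ℝ ρ y v))
      ((α * Real.exp (α * ρ x)) • ((fderiv ℝ (fderiv ℝ ρ) x).flip v)
        + (fderiv ℝ ρ x v) • (α • ((α * Real.exp (α * ρ x)) • fderiv ℝ ρ x))) x :=
    h1.mul h2
  have heq : fderiv ℝ (fun y => fderiv ℝ (fun z => Real.exp (α * ρ z)) y v) x = fderiv ℝ (fun y => (α * Real.exp (α * ρ y)) * (fderiv ℝ ρ y v)) x := hev.fderiv_eq
  show fderiv ℝ (fun y => fderiv ℝ (fun z => Real.exp (α * ρ z)) y v) x w = _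
  rw [heq, h3.fderiv]
  simp [ContinuousLinearMap.flip_apply]
  ring

end Aux

/-- Pseudoconvexity of the exponential weight `φ = e^{αρ}` for large `α`,
on a compact set where `‖∇ρ‖ = 1`. -/
theorem stmt_6 (n : ℕ) (hn : 1 ≤ n) (U : Set (E n)) (hU : IsOpen U)
    (K : Set (E n)) (hK : IsCompact K) (hKU : K ⊆ U)
    (ρ : E n → ℝ) (hρ : ContDiffOn ℝ (⊤ : ℕ∞) ρ U)
    (hgrad : ∀ x ∈ K, ‖gradient ρ x‖ = 1) :
    ∃ α₀ : ℝ, 0 < α₀ ∧ ∀ α : ℝ, α₀ ≤ α →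
      ∀ x ∈ K, ∀ τ : ℝ, 0 < τ → ∀ ξ : E n,
        ‖ξ‖ = τ * ‖gradient (fun y => Real.exp (α * ρ y)) x‖ →
        0 < hessian (fun y => Real.exp (α * ρ y)) x ξ ξ +
            τ^2 * hessian (fun y => Real.exp (α * ρ y)) x
              (gradient (fun y => Real.exp (α * ρ y)) x)
              (gradient (fun y => Real.exp (α * ρ y)) x) := by
  have hFc : ContDiffOn ℝ (⊤ : ℕ∞) (fderiv ℝ ρ) U :=
    hρ.fderiv_of_isOpen hU (by exact_mod_cast le_top)
  have hBcont : ContinuousOn (fun y => fderiv ℝ (fun z => fderiv ℝ ρ z) y) U :=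
    hFc.continuousOn_fderiv_of_isOpen hU (by exact_mod_cast le_top)
  obtain ⟨C, hC⟩ := hK.exists_bound_of_continuousOn (f := fun y => fderiv ℝ (fun z => fderiv ℝ ρ z) y) (hBcont.mono hKU)
  have hC'0 : (0:ℝ) ≤ max C 0 := le_max_right _ _
  refine ⟨2 * max C 0 + 1, by positivity, ?_⟩
  intro α hα x hxK τ hτ ξ hξ
  have hxU : x ∈ U := hKU hxK
  have hα0 : 0 < α := lt_of_lt_of_le (by positivity) hα
  have hdiffρ : DifferentiableAt ℝ ρ x :=
    (hρ.differentiableOn (by simp)).differentiableAt (hU.mem_nhds hxU)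
  have he0 : 0 < Real.exp (α * ρ x) := Real.exp_pos _
  have hg1 : ‖gradient ρ x‖ = 1 := hgrad x hxK
  have hP0 : 0 < α * Real.exp (α * ρ x) := mul_pos hα0 he0
  have hG : gradient (fun y => Real.exp (α * ρ y)) x
      = (α * Real.exp (α * ρ x)) • gradient ρ x := gradient_expcomp α hdiffρ
  have hGnorm : ‖gradient (fun y => Real.exp (α * ρ y)) x‖ = α * Real.exp (α * ρ x) := by
    rw [hG, norm_smul, hg1, mul_one, Real.norm_eq_abs, abs_of_pos hP0]
  have hnξ : ‖ξ‖ = τ * (α * Real.exp (α * ρ x)) := by rw [hξ, hGnorm]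
  have hBbound : ∀ v w : E n,
      -((max C 0) * ‖w‖ * ‖v‖) ≤ (fderiv ℝ (fun z => fderiv ℝ ρ z) x w) v := by
    intro v w
    have h1 : ‖(fderiv ℝ (fun z => fderiv ℝ ρ z) x w) v‖
        ≤ max C 0 * ‖w‖ * ‖v‖ := by
      calc ‖(fderiv ℝ (fun z => fderiv ℝ ρ z) x w) v‖
          ≤ ‖fderiv ℝ (fun z => fderiv ℝ ρ z) x w‖ * ‖v‖ :=
            ContinuousLinearMap.le_opNorm _ v
        _ ≤ (‖fderiv ℝ (fun z => fderiv ℝ ρ z) x‖ * ‖w‖) * ‖v‖ := by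
            gcongr
            exact ContinuousLinearMap.le_opNorm _ w
        _ ≤ (max C 0 * ‖w‖) * ‖v‖ := by
            gcongr
            exact le_trans (hC x hxK) (le_max_left _ _)
        _ = max C 0 * ‖w‖ * ‖v‖ := by ring
    have h2 := neg_abs_le ((fderiv ℝ (fun z => fderiv ℝ ρ z) x w) v)
    rw [Real.norm_eq_abs] at h1
    linarith
  have hdPg : fderiv ℝ ρ x ((α * Real.exp (α * ρ x)) • gradient ρ x)
      = α * Real.exp (α * ρ x) := by
    rw [map_smul, smul_eq_mul, ← inner_gradient x (gradient ρ x),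
      real_inner_self_eq_norm_sq, hg1]
    ring
  have hBPg : (fderiv ℝ (fun z => fderiv ℝ ρ z) x ((α * Real.exp (α * ρ x)) • gradient ρ x))
        ((α * Real.exp (α * ρ x)) • gradient ρ x)
      = (α * Real.exp (α * ρ x))^2 *
        ((fderiv ℝ (fun z => fderiv ℝ ρ z) x (gradient ρ x)) (gradient ρ x)) := by
    rw [map_smul]
    simp only [ContinuousLinearMap.smul_apply, map_smul, smul_eq_mul]
    ring
  have hHξ : hessian (fun y => Real.exp (α * ρ y)) x ξ ξ
      = α * Real.exp (α * ρ x) * (α * (fderiv ℝ ρ x ξ)^2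
        + (fderiv ℝ (fun z => fderiv ℝ ρ z) x ξ) ξ) := by
    rw [hessian_expcomp hU hρ α hxU]
    ring
  have hHG : hessian (fun y => Real.exp (α * ρ y)) x
        ((α * Real.exp (α * ρ x)) • gradient ρ x) ((α * Real.exp (α * ρ x)) • gradient ρ x)
      = α * Real.exp (α * ρ x) * (α * (α * Real.exp (α * ρ x))^2
        + (α * Real.exp (α * ρ x))^2 *
          ((fderiv ℝ (fun z => fderiv ℝ ρ z) x (gradient ρ x)) (gradient ρ x))) := by
    rw [hessian_expcomp hU hρ α hxU, hdPg, hBPg]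
    ring
  rw [hG, hHξ, hHG]
  have hbξ := hBbound ξ ξ
  rw [hnξ] at hbξ
  have hbg := hBbound (gradient ρ x) (gradient ρ x)
  rw [hg1, mul_one, mul_one] at hbg
  have hpos : 0 < τ^2 * (α * Real.exp (α * ρ x))^3 := by positivity
  have h5 := mul_le_mul_of_nonneg_left hbξ hP0.le
  have h6 := mul_le_mul_of_nonneg_left hbg hpos.le
  have h7 := mul_le_mul_of_nonneg_left hα hpos.le
  have h8 : 0 ≤ α * Real.exp (α * ρ x) * (α * (fderiv ℝ ρ x ξ)^2) :=
    mul_nonneg hP0.le (mul_nonneg hα0.le (sq_nonneg _))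
  nlinarith [h5, h6, h7, h8, hpos, hC'0]
end
end
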